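/- Consider a robust minimum cost flow instance with a unique source s and a unique sink t, scenarios strictly ordered by supply b^1(s) < b^2(s) < ... < b^{|Lambda|}(s), and suppose integral feasible flows f^1 and f^{|Lambda|} for the first and last scenario are given that agree on all fixed arcs. Then there exists a (possibly fractional) robust b-flow f = (f^1, ..., f^{|Lambda|}) whose cost equals max{c(f^1), c(f^{|Lambda|})}; in particular, for every intermediate scenario lambda, the convex combination gamma^lambda f^1 + (1-gamma^lambda) f^{|Lambda|}, with gamma^lambda chosen so that b^lambda(s) = gamma^lambda b^1(s) + (1-gamma^lambda) b^{|Lambda|}(s), is a feasible b^lambda-flow agreeing with f^1 on all fixed arcs and has cost at most max{c(f^1), c(f^{|Lambda|})}. -/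

import Mathlib

open Finset

structure Net (V A : Type) where
  src : A → V
  dst : A → V
  isFixed : A → Bool
  u : A → ℤ
  c : A → ℤ

variable {V A : Type} [Fintype V] [Fintype A] [DecidableEq V]

def excess (N : Net V A) (f : A → ℤ) (v : V) : ℤ :=
  ∑ a ∈ univ.filter (fun a => N.src a = v), f a -
    ∑ a ∈ univ.filter (fun a => N.dst a = v), f a

def IsFlow (N : Net V A) (b : V → ℤ) (f : A → ℤ) : Prop :=
  (∀ a, 0 ≤ f a ∧ f a ≤ N.u a) ∧ ∀ v, excess N f v = b v

def cost (N : Net V A) (f : A → ℤ) : ℤ := ∑ a, N.c a * f a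

def qexcess (N : Net V A) (f : A → ℚ) (v : V) : ℚ :=
  ∑ a ∈ univ.filter (fun a => N.src a = v), f a -
    ∑ a ∈ univ.filter (fun a => N.dst a = v), f a

def QIsFlow (N : Net V A) (b : V → ℤ) (f : A → ℚ) : Prop :=
  (∀ a, 0 ≤ f a ∧ f a ≤ (N.u a : ℚ)) ∧ ∀ v, qexcess N f v = (b v : ℚ)

def qcost (N : Net V A) (f : A → ℚ) : ℚ := ∑ a, (N.c a : ℚ) * f a

lemma qexcess_lin (N : Net V A) (p q : ℚ) (f g : A → ℚ) (v : V) :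
    qexcess N (fun a => p * f a + q * g a) v = p * qexcess N f v + q * qexcess N g v := by
  simp only [qexcess, Finset.sum_add_distrib, ← Finset.mul_sum]
  ring

lemma qcost_lin (N : Net V A) (p q : ℚ) (f g : A → ℚ) :
    qcost N (fun a => p * f a + q * g a) = p * qcost N f + q * qcost N g := by
  simp only [qcost, Finset.mul_sum, ← Finset.sum_add_distrib]
  exact Finset.sum_congr rfl fun a _ => by ring

/-- Lemma 2 of the paper: in a unique-source unique-sink instance with
scenarios strictly ordered by supply, given integral feasible flows `f1`, `fL` for the
first and last scenario agreeing on all fixed arcs, there is a (possibly fractional)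
robust `b`-flow whose first and last scenario flows are `f1` and `fL`, whose every
intermediate scenario flow is the convex combination `γ^λ f1 + (1-γ^λ) fL` (with
`γ^λ` matching the supplies), and whose cost is `max {c(f1), c(fL)}`. -/
theorem convex_combination_robust_flow
    (L : ℕ) (hL : 2 ≤ L)
    (N : Net V A) (b : Fin L → V → ℤ) (s t : V) (hst : s ≠ t)
    (hinterior : ∀ (lam : Fin L) (v : V), v ≠ s → v ≠ t → b lam v = 0)
    (hsink : ∀ lam : Fin L, b lam t = - b lam s)
    (hpos : 0 < b ⟨0, by omega⟩ s)
    (hord : StrictMono fun lam : Fin L => b lam s)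
    (f1 fL : A → ℤ)
    (hf1 : IsFlow N (b ⟨0, by omega⟩) f1)
    (hfL : IsFlow N (b ⟨L - 1, by omega⟩) fL)
    (hagree : ∀ a, N.isFixed a = true → f1 a = fL a) :
    ∃ g : Fin L → A → ℚ,
      (∀ lam, QIsFlow N (b lam) (g lam)) ∧
      (∀ lam lam' a, N.isFixed a = true → g lam a = g lam' a) ∧
      (g ⟨0, by omega⟩ = fun a => (f1 a : ℚ)) ∧
      (g ⟨L - 1, by omega⟩ = fun a => (fL a : ℚ)) ∧
      (∀ lam : Fin L, ∃ γ : ℚ, 0 ≤ γ ∧ γ ≤ 1 ∧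
        γ * (b ⟨0, by omega⟩ s : ℚ) + (1 - γ) * (b ⟨L - 1, by omega⟩ s : ℚ)
          = (b lam s : ℚ) ∧
        ∀ a, g lam a = γ * (f1 a : ℚ) + (1 - γ) * (fL a : ℚ)) ∧
      (∀ lam, qcost N (g lam) ≤ max (cost N f1 : ℚ) (cost N fL : ℚ)) := by
  have hL1 : (0:ℕ) < L - 1 := by omega
  set i0 : Fin L := ⟨0, by omega⟩ with hi0
  set iL : Fin L := ⟨L - 1, by omega⟩ with hiL
  have h01 : i0 < iL := by simp [hi0, hiL, Fin.lt_def]; omega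
  have hlt : b i0 s < b iL s := hord h01
  set D : ℚ := (b iL s : ℚ) - (b i0 s : ℚ) with hD
  have hDpos : 0 < D := by
    have : (b i0 s : ℚ) < (b iL s : ℚ) := by exact_mod_cast hlt
    linarith
  set γ : Fin L → ℚ := fun lam => ((b iL s : ℚ) - (b lam s : ℚ)) / D with hγ
  have hγ0 : ∀ lam, 0 ≤ γ lam := by
    intro lam
    have : b lam s ≤ b iL s := hord.monotone (by simp [hiL, Fin.le_def]; omega)
    have : (b lam s : ℚ) ≤ (b iL s : ℚ) := by exact_mod_cast this
    exact div_nonneg (by linarith) hDpos.le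
  have hγ1 : ∀ lam, γ lam ≤ 1 := by
    intro lam
    have : b i0 s ≤ b lam s := hord.monotone (by simp [hi0, Fin.le_def])
    have h' : (b i0 s : ℚ) ≤ (b lam s : ℚ) := by exact_mod_cast this
    have : γ lam = ((b iL s : ℚ) - (b lam s : ℚ)) / D := rfl
    rw [this, div_le_one hDpos, hD]
    linarith
  have hcomb : ∀ lam, γ lam * (b i0 s : ℚ) + (1 - γ lam) * (b iL s : ℚ) = (b lam s : ℚ) := by
    intro lam
    have hg : γ lam = ((b iL s : ℚ) - (b lam s : ℚ)) / D := rfl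
    rw [hg, hD]
    field_simp [(sub_pos.mpr (by exact_mod_cast hlt : (b i0 s : ℚ) < (b iL s : ℚ))).ne']
    ring
  have hcombv : ∀ lam v, γ lam * (b i0 v : ℚ) + (1 - γ lam) * (b iL v : ℚ) = (b lam v : ℚ) := by
    intro lam v
    by_cases hvs : v = s
    · subst hvs; exact hcomb lam
    by_cases hvt : v = t
    · subst hvt
      rw [hsink i0, hsink iL, hsink lam]
      push_cast
      have := hcomb lam
      linarith
    · rw [hinterior i0 v hvs hvt, hinterior iL v hvs hvt, hinterior lam v hvs hvt]
      push_cast; ring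
  refine ⟨fun lam a => γ lam * (f1 a : ℚ) + (1 - γ lam) * (fL a : ℚ), ?_, ?_, ?_, ?_, ?_, ?_⟩
  · intro lam
    constructor
    · intro a
      obtain ⟨h1a, h1b⟩ := hf1.1 a
      obtain ⟨h2a, h2b⟩ := hfL.1 a
      have h1a' : (0:ℚ) ≤ (f1 a : ℚ) := by exact_mod_cast h1a
      have h1b' : (f1 a : ℚ) ≤ (N.u a : ℚ) := by exact_mod_cast h1b
      have h2a' : (0:ℚ) ≤ (fL a : ℚ) := by exact_mod_cast h2a
      have h2b' : (fL a : ℚ) ≤ (N.u a : ℚ) := by exact_mod_cast h2b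
      have g0 := hγ0 lam
      have g1 := hγ1 lam
      constructor
      · show (0:ℚ) ≤ γ lam * (f1 a : ℚ) + (1 - γ lam) * (fL a : ℚ)
        have h3 := mul_nonneg g0 h1a'
        have h4 := mul_nonneg (by linarith : (0:ℚ) ≤ 1 - γ lam) h2a'
        linarith
      · show γ lam * (f1 a : ℚ) + (1 - γ lam) * (fL a : ℚ) ≤ (N.u a : ℚ)
        have h3 := mul_le_mul_of_nonneg_left h1b' g0
        have h4 := mul_le_mul_of_nonneg_left h2b' (by linarith : (0:ℚ) ≤ 1 - γ lam)
        nlinarith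
    · intro v
      show qexcess N (fun a => γ lam * (f1 a : ℚ) + (1 - γ lam) * (fL a : ℚ)) v = (b lam v : ℚ)
      have e1 : qexcess N (fun a => (f1 a : ℚ)) v = (b i0 v : ℚ) := by
        have := hf1.2 v
        simp only [qexcess, ← this, excess]
        push_cast
        ring
      have e2 : qexcess N (fun a => (fL a : ℚ)) v = (b iL v : ℚ) := by
        have := hfL.2 v
        simp only [qexcess, ← this, excess]
        push_cast
        ring
      rw [qexcess_lin, e1, e2, hcombv lam v]
  · intro lam lam' a ha
    show γ lam * (f1 a : ℚ) + (1 - γ lam) * (fL a : ℚ)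
        = γ lam' * (f1 a : ℚ) + (1 - γ lam') * (fL a : ℚ)
    rw [hagree a ha]
    ring
  · funext a
    show γ i0 * (f1 a : ℚ) + (1 - γ i0) * (fL a : ℚ) = (f1 a : ℚ)
    have hg : γ i0 = 1 := by
      have : γ i0 = ((b iL s : ℚ) - (b i0 s : ℚ)) / D := rfl
      rw [this, hD, div_self hDpos.ne']
    rw [hg]; ring
  · funext a
    show γ iL * (f1 a : ℚ) + (1 - γ iL) * (fL a : ℚ) = (fL a : ℚ)
    have hg : γ iL = 0 := by
      have : γ iL = ((b iL s : ℚ) - (b iL s : ℚ)) / D := rfl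
      rw [this]; simp
    rw [hg]; ring
  · intro lam
    exact ⟨γ lam, hγ0 lam, hγ1 lam, hcomb lam, fun a => rfl⟩
  · intro lam
    show qcost N (fun a => γ lam * (f1 a : ℚ) + (1 - γ lam) * (fL a : ℚ))
        ≤ max (cost N f1 : ℚ) (cost N fL : ℚ)
    have c1 : qcost N (fun a => (f1 a : ℚ)) = (cost N f1 : ℚ) := by
      simp only [qcost, cost]; push_cast; ring
    have c2 : qcost N (fun a => (fL a : ℚ)) = (cost N fL : ℚ) := by
      simp only [qcost, cost]; push_cast; ring
    rw [qcost_lin, c1, c2]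
    have g0 := hγ0 lam
    have g1 := hγ1 lam
    have h1 : (cost N f1 : ℚ) ≤ max (cost N f1 : ℚ) (cost N fL : ℚ) := le_max_left _ _
    have h2 : (cost N fL : ℚ) ≤ max (cost N f1 : ℚ) (cost N fL : ℚ) := le_max_right _ _
    nlinarith
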